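/- Let Σ* be a symmetric positive definite d×d real matrix and Σ a symmetric positive semidefinite d×d real matrix. Then the matrix S = S(Σ*,Σ) = Σ*^{-1/2}(Σ*^{1/2}ΣΣ*^{1/2})^{1/2}Σ*^{-1/2} is symmetric positive semidefinite and satisfies S Σ* S = Σ. Consequently, with a = m − S m* and V = S − I_d for any m, m* ∈ ℝ^d, one has a + (V+I_d)m* = m and (V+I_d)Σ*(V+I_d) = Σ, i.e., ξ_{μ*}(φ_{μ*}(N(m,Σ))) = N(m,Σ). -/

import Mathlib

open MeasureTheory Matrix Filter ProbabilityTheory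

open Classical in
/-- The unique symmetric positive semidefinite square root of a positive semidefinite real
matrix (junk value `0` if the matrix is not positive semidefinite). -/
noncomputable def matSqrt {d : ℕ} (A : Matrix (Fin d) (Fin d) ℝ) : Matrix (Fin d) (Fin d) ℝ :=
  if h : A.PosSemidef then
    (h.1.eigenvectorUnitary : Matrix (Fin d) (Fin d) ℝ) *
      diagonal ((↑) ∘ (√·) ∘ h.1.eigenvalues) *
      (star h.1.eigenvectorUnitary : Matrix (Fin d) (Fin d) ℝ)
  else 0

/-- `S(Σ₁, Σ₂) = Σ₁^{-1/2} (Σ₁^{1/2} Σ₂ Σ₁^{1/2})^{1/2} Σ₁^{-1/2}`. -/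
noncomputable def Smat {d : ℕ} (S1 S2 : Matrix (Fin d) (Fin d) ℝ) : Matrix (Fin d) (Fin d) ℝ :=
  (matSqrt S1)⁻¹ * matSqrt (matSqrt S1 * S2 * matSqrt S1) * (matSqrt S1)⁻¹

open Classical in
/-- The Gaussian measure `N(m, Σ)` on `ℝ^d`, realized as the pushforward of a product of
standard real Gaussians under `x ↦ m + Σ^{1/2} x` (junk value `0` if `Σ` is not psd). -/
noncomputable def gaussianMeasure {d : ℕ} (m : Fin d → ℝ) (S : Matrix (Fin d) (Fin d) ℝ) :
    Measure (Fin d → ℝ) :=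
  if _h : S.PosSemidef then
    (Measure.pi fun _ : Fin d => gaussianReal 0 1).map (fun x => m + (matSqrt S).mulVec x)
  else 0

/-- Squared euclidean distance on `ℝ^d`. -/
def sqDist {d : ℕ} (x y : Fin d → ℝ) : ℝ := ∑ i, (x i - y i) ^ 2

/-- The 2-Wasserstein distance between two measures on `ℝ^d` (with the euclidean cost). -/
noncomputable def W2 {d : ℕ} (μ ν : Measure (Fin d → ℝ)) : ℝ :=
  Real.sqrt (⨅ π ∈ {π : Measure ((Fin d → ℝ) × (Fin d → ℝ)) |
      IsProbabilityMeasure π ∧ π.map Prod.fst = μ ∧ π.map Prod.snd = ν},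
    ∫⁻ p, ENNReal.ofReal (sqDist p.1 p.2) ∂π).toReal

/-- The inner product `⟨(a,V),(b,U)⟩_{(m*,Σ*)}` on `Ξ_d`. -/
noncomputable def xiInner {d : ℕ} (ms : Fin d → ℝ) (Ss : Matrix (Fin d) (Fin d) ℝ)
    (a : Fin d → ℝ) (V : Matrix (Fin d) (Fin d) ℝ)
    (b : Fin d → ℝ) (U : Matrix (Fin d) (Fin d) ℝ) : ℝ :=
  (a + V.mulVec ms) ⬝ᵥ (b + U.mulVec ms) + (V * Ss * U).trace

/-- The squared norm `‖(a,V)‖²_{(m*,Σ*)} = ‖a + V m*‖² + tr(V Σ* V)` on `Ξ_d`. -/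
noncomputable def xiNormSq {d : ℕ} (ms : Fin d → ℝ) (Ss : Matrix (Fin d) (Fin d) ℝ)
    (a : Fin d → ℝ) (V : Matrix (Fin d) (Fin d) ℝ) : ℝ :=
  (∑ i, (a i + V.mulVec ms i) ^ 2) + (V * Ss * V).trace

/-- The norm `‖(a,V)‖_{(m*,Σ*)}` on `Ξ_d`. -/
noncomputable def xiNorm {d : ℕ} (ms : Fin d → ℝ) (Ss : Matrix (Fin d) (Fin d) ℝ)
    (a : Fin d → ℝ) (V : Matrix (Fin d) (Fin d) ℝ) : ℝ :=
  Real.sqrt (xiNormSq ms Ss a V)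

lemma matSqrt_posSemidef {d : ℕ} {A : Matrix (Fin d) (Fin d) ℝ} (h : A.PosSemidef) :
    (matSqrt A).PosSemidef := by
  rw [matSqrt, dif_pos h]
  have hD : (diagonal ((↑) ∘ (√·) ∘ h.1.eigenvalues) : Matrix (Fin d) (Fin d) ℝ).PosSemidef := by
    rw [posSemidef_diagonal_iff]
    intro i
    simp [Real.sqrt_nonneg]
  have := hD.mul_mul_conjTranspose_same (h.1.eigenvectorUnitary : Matrix (Fin d) (Fin d) ℝ)
  rwa [← Matrix.star_eq_conjTranspose] at this

lemma matSqrt_mul_self {d : ℕ} {A : Matrix (Fin d) (Fin d) ℝ} (h : A.PosSemidef) :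
    matSqrt A * matSqrt A = A := by
  rw [matSqrt, dif_pos h]
  conv_rhs => rw [h.1.spectral_theorem, Unitary.conjStarAlgAut_apply]
  have hUU : (star h.1.eigenvectorUnitary : Matrix (Fin d) (Fin d) ℝ) *
      (h.1.eigenvectorUnitary : Matrix (Fin d) (Fin d) ℝ) = 1 := Unitary.coe_star_mul_self _
  have hDD : (diagonal ((↑) ∘ (√·) ∘ h.1.eigenvalues) : Matrix (Fin d) (Fin d) ℝ) *
      diagonal ((↑) ∘ (√·) ∘ h.1.eigenvalues) = diagonal (RCLike.ofReal ∘ h.1.eigenvalues) := by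
    rw [diagonal_mul_diagonal]
    congr 1
    funext i
    simp [Real.mul_self_sqrt (h.eigenvalues_nonneg i)]
  calc _ = (h.1.eigenvectorUnitary : Matrix (Fin d) (Fin d) ℝ) *
        (diagonal ((↑) ∘ (√·) ∘ h.1.eigenvalues) *
        ((star h.1.eigenvectorUnitary : Matrix (Fin d) (Fin d) ℝ) *
        (h.1.eigenvectorUnitary : Matrix (Fin d) (Fin d) ℝ)) *
        diagonal ((↑) ∘ (√·) ∘ h.1.eigenvalues)) *
        (star h.1.eigenvectorUnitary : Matrix (Fin d) (Fin d) ℝ) := by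
          simp only [Matrix.mul_assoc]
    _ = _ := by rw [hUU, Matrix.mul_one, hDD]

/-- For `Σ*` symmetric positive definite and `Σ` symmetric positive
semidefinite, `S = S(Σ*,Σ)` is symmetric positive semidefinite and satisfies `SΣ*S = Σ`.
Consequently, with `a = m − Sm*` and `V = S − I`, one has `a + (V+I)m* = m` and
`(V+I)Σ*(V+I) = Σ`, i.e. `ξ_{μ*}(φ_{μ*}(N(m,Σ))) = N(m,Σ)`. -/
theorem stmt_7 {d : ℕ} (m ms : Fin d → ℝ) (S Ss : Matrix (Fin d) (Fin d) ℝ)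
    (hSs : Ss.PosDef) (hS : S.PosSemidef) :
    (Smat Ss S).PosSemidef ∧
    Smat Ss S * Ss * Smat Ss S = S ∧
    (m - (Smat Ss S).mulVec ms) + ((Smat Ss S - 1) + 1).mulVec ms = m ∧
    ((Smat Ss S - 1) + 1) * Ss * ((Smat Ss S - 1) + 1) = S ∧
    gaussianMeasure ((m - (Smat Ss S).mulVec ms) + ((Smat Ss S - 1) + 1).mulVec ms)
        (((Smat Ss S - 1) + 1) * Ss * ((Smat Ss S - 1) + 1))
      = gaussianMeasure m S := by
  have hSsps := hSs.posSemidef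
  have hRdef : matSqrt Ss = matSqrt Ss := rfl
  set R := matSqrt Ss with hR
  have hRps : R.PosSemidef := hRdef ▸ matSqrt_posSemidef hSsps
  have hRR : R * R = Ss := hRdef ▸ matSqrt_mul_self hSsps
  have hRdet : IsUnit R.det := by
    have hdet : R.det * R.det = Ss.det := by rw [← Matrix.det_mul, hRR]
    have : IsUnit Ss.det := hSs.det_pos.ne'.isUnit
    exact isUnit_of_mul_isUnit_left (hdet ▸ this)
  have hRH : Rᴴ = R := hRps.1
  have hB : (R * S * R).PosSemidef := by
    have := hS.mul_mul_conjTranspose_same R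
    rwa [hRH] at this
  have hTdef : matSqrt (R * S * R) = matSqrt (R * S * R) := rfl
  set T := matSqrt (R * S * R) with hT
  have hTps : T.PosSemidef := hTdef ▸ matSqrt_posSemidef hB
  have hTT : T * T = R * S * R := hTdef ▸ matSqrt_mul_self hB
  have hSmat : Smat Ss S = R⁻¹ * T * R⁻¹ := rfl
  have hpsd : (Smat Ss S).PosSemidef := by
    rw [hSmat]
    have := hTps.mul_mul_conjTranspose_same R⁻¹
    rwa [Matrix.conjTranspose_nonsing_inv, hRH] at this
  have h2 : Smat Ss S * Ss * Smat Ss S = S := by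
    rw [hSmat, ← hRR]
    have hc1 : R⁻¹ * T * R⁻¹ * (R * R) * (R⁻¹ * T * R⁻¹) = R⁻¹ * (T * T) * R⁻¹ := by
      simp only [Matrix.mul_assoc, Matrix.nonsing_inv_mul_cancel_left _ _ hRdet,
        Matrix.mul_nonsing_inv_cancel_left _ _ hRdet]
    rw [hc1, hTT]
    simp only [Matrix.mul_assoc, Matrix.nonsing_inv_mul_cancel_left _ _ hRdet,
      Matrix.mul_nonsing_inv _ hRdet, Matrix.mul_one]
  have hsub : (Smat Ss S - 1) + 1 = Smat Ss S := sub_add_cancel _ _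
  refine ⟨hpsd, h2, ?_, ?_, ?_⟩ <;> rw [hsub]
  · exact sub_add_cancel _ _
  · exact h2
  · rw [h2, sub_add_cancel]
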